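/- If (G, D, {D₁,…,Dₙ}) is a minimal decomposition of a closed triangulated surface T, then every triangle of G intersects the boundary of G. -/

import Mathlib

namespace Tri

/-- A (pure 2-dimensional) simplicial complex, given by its set of triangles
(each triangle is a 3-element finset of vertex labels). -/
abbrev Complex := Finset (Finset ℕ)

/-- The vertices of a complex. -/
def vertices (K : Complex) : Finset ℕ := K.biUnion id

/-- The edges of a complex: 2-element subsets of triangles. -/
def edges (K : Complex) : Finset (Finset ℕ) := K.biUnion fun t => t.powersetCard 2

/-- The valence of a vertex: the number of triangles containing it. -/
def valence (K : Complex) (v : ℕ) : ℕ := (K.filter (fun t => v ∈ t)).card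

/-- The maximal vertex-valence of a complex. -/
def mv (K : Complex) : ℕ := (vertices K).sup (valence K)

/-- Euler characteristic V - E + T. -/
def eulerChar (K : Complex) : ℤ :=
  ((vertices K).card : ℤ) - (edges K).card + K.card

/-- Two triangles of `K` both containing `v` and sharing an edge. -/
def adjAt (K : Complex) (v : ℕ) (t₁ t₂ : Finset ℕ) : Prop :=
  t₁ ∈ K ∧ t₂ ∈ K ∧ v ∈ t₁ ∧ v ∈ t₂ ∧ (t₁ ∩ t₂).card = 2

/-- Two triangles of `K` sharing an edge. -/
def adj (K : Complex) (t₁ t₂ : Finset ℕ) : Prop :=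
  t₁ ∈ K ∧ t₂ ∈ K ∧ (t₁ ∩ t₂).card = 2

/-- A triangulation of a connected compact surface, possibly with boundary:
every triangle has 3 vertices, every edge lies in at most two triangles,
the triangles around every vertex are connected via edges through that vertex
(so every vertex link is a path or a circle), and the complex is connected. -/
structure IsSurface (K : Complex) : Prop where
  nonempty : K.Nonempty
  card3 : ∀ t ∈ K, t.card = 3
  edge_le : ∀ e ∈ edges K, (K.filter (fun t => e ⊆ t)).card ≤ 2
  link_conn : ∀ v, ∀ t₁ ∈ K, ∀ t₂ ∈ K, v ∈ t₁ → v ∈ t₂ →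
    Relation.ReflTransGen (adjAt K v) t₁ t₂
  conn : ∀ t₁ ∈ K, ∀ t₂ ∈ K, Relation.ReflTransGen (adj K) t₁ t₂

/-- A triangulation of a closed (connected compact) surface: every edge lies
in exactly two triangles. -/
def IsClosedSurface (K : Complex) : Prop :=
  IsSurface K ∧ ∀ e ∈ edges K, (K.filter (fun t => e ⊆ t)).card = 2

/-- Boundary edges: edges lying in exactly one triangle. -/
def bdryEdges (K : Complex) : Finset (Finset ℕ) :=
  (edges K).filter (fun e => (K.filter (fun t => e ⊆ t)).card = 1)

/-- Boundary vertices. -/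
def bdryVertices (K : Complex) : Finset ℕ := (bdryEdges K).biUnion id

/-- Interior vertices. -/
def intVertices (K : Complex) : Finset ℕ := vertices K \ bdryVertices K

/-- A triangulated disc: a connected compact surface with nonempty boundary and
Euler characteristic 1. -/
def IsDisc (K : Complex) : Prop :=
  IsSurface K ∧ eulerChar K = 1 ∧ (bdryEdges K).Nonempty

/-- Two edges sharing a vertex. -/
def edgeAdj (E : Complex) (e₁ e₂ : Finset ℕ) : Prop :=
  e₁ ∈ E ∧ e₂ ∈ E ∧ (e₁ ∩ e₂).Nonempty

/-- A set of edges forming a triangulated circle. -/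
def IsCircle (E : Complex) : Prop :=
  E.Nonempty ∧ (∀ e ∈ E, e.card = 2) ∧
  (∀ v ∈ E.biUnion id, (E.filter (fun e => v ∈ e)).card = 2) ∧
  ∀ e₁ ∈ E, ∀ e₂ ∈ E, Relation.ReflTransGen (edgeAdj E) e₁ e₂

/-- Simplicial isomorphism (re-labeling). -/
def Iso (K₁ K₂ : Complex) : Prop :=
  ∃ f : ℕ → ℕ, Set.InjOn f (vertices K₁) ∧ K₁.image (Finset.image f) = K₂

/-- The boundary of the tetrahedron. -/
def tetra : Complex := {{1,2,3},{1,2,4},{1,3,4},{2,3,4}}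

/-- The boundary of the octahedron. -/
def octa : Complex := {{1,2,3},{1,2,4},{1,3,5},{1,4,5},{2,3,6},{2,4,6},{3,5,6},{4,5,6}}

/-- The vertices of the link of a vertex. -/
def linkV (K : Complex) (v : ℕ) : Finset ℕ :=
  ((K.filter (fun t => v ∈ t)).biUnion id).erase v

/-- The result of the inverse T-move removing the vertex `v`. -/
def invT (K : Complex) (v : ℕ) : Complex :=
  insert (linkV K v) (K.filter (fun t => v ∉ t))

/-- `K'` is obtained from `K` by an inverse T-move: a 3-valent vertex whose
link does not bound a triangle is removed. -/
def InvTStep (K K' : Complex) : Prop :=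
  ∃ v, valence K v = 3 ∧ linkV K v ∉ K ∧ K' = invT K v

/-- A root: a closed triangulated surface admitting no inverse T-move. -/
def IsRoot (K : Complex) : Prop := IsClosedSurface K ∧ ∀ K', ¬ InvTStep K K'

/-- `R` is a root of `K`: obtained from `K` by inverse T-moves, with no
further inverse T-move applicable. -/
def IsRootOf (R K : Complex) : Prop :=
  Relation.ReflTransGen InvTStep K R ∧ ∀ R', ¬ InvTStep R R'

/-- The directed edges of an ordered triangle. -/
def dedges (p : ℕ × ℕ × ℕ) : Finset (ℕ × ℕ) := {(p.1, p.2.1), (p.2.1, p.2.2), (p.2.2, p.1)}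

/-- Orientability: a coherent choice of cyclic orders on the triangles,
i.e. no directed edge is shared by two distinct triangles. -/
def Orientable (K : Complex) : Prop :=
  ∃ o : Finset ℕ → ℕ × ℕ × ℕ,
    (∀ t ∈ K, ({(o t).1, (o t).2.1, (o t).2.2} : Finset ℕ) = t) ∧
    ∀ t₁ ∈ K, ∀ t₂ ∈ K, t₁ ≠ t₂ → ∀ p ∈ dedges (o t₁), p ∉ dedges (o t₂)

/-- Two closed triangulated surfaces triangulate the same surface iff they
have the same Euler characteristic and the same orientability. -/
def SameSurface (K₁ K₂ : Complex) : Prop :=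
  eulerChar K₁ = eulerChar K₂ ∧ (Orientable K₁ ↔ Orientable K₂)

/-- The intersection of two subcomplexes is a triangulated circle or empty. -/
def CircleInter (A B : Complex) : Prop :=
  (IsCircle (edges A ∩ edges B) ∨ edges A ∩ edges B = ∅) ∧
  vertices A ∩ vertices B = (edges A ∩ edges B).biUnion id

/-- A decomposition `(G, D, Ds)` of a closed triangulated surface `K`. -/
structure IsDecomp (K G D : Complex) (Ds : Finset Complex) : Prop where
  closed : IsClosedSurface K
  subG : G ⊆ K
  subD : D ⊆ K
  subDs : ∀ Di ∈ Ds, Di ⊆ K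
  surfG : IsSurface G
  discD : IsDisc D
  discDs : ∀ Di ∈ Ds, IsDisc Di
  maxv : ∃ v ∈ intVertices D, valence K v = mv K
  cover : G ∪ D ∪ Ds.sup id = K
  disjGD : Disjoint G D
  disjGDs : ∀ Di ∈ Ds, Disjoint G Di
  disjDDs : ∀ Di ∈ Ds, Disjoint D Di
  disjDsDs : ∀ Di ∈ Ds, ∀ Dj ∈ Ds, Di ≠ Dj → Disjoint Di Dj
  interGD : CircleInter G D
  interGDs : ∀ Di ∈ Ds, CircleInter G Di
  interDDs : ∀ Di ∈ Ds, CircleInter D Di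
  interDsDs : ∀ Di ∈ Ds, ∀ Dj ∈ Ds, Di ≠ Dj → CircleInter Di Dj

/-- A minimal decomposition: the genus-surface has the fewest triangles. -/
def IsMinDecomp (K G D : Complex) (Ds : Finset Complex) : Prop :=
  IsDecomp K G D Ds ∧ ∀ G' D' Ds', IsDecomp K G' D' Ds' → G.card ≤ G'.card

open Finset

lemma mem_edges {K : Complex} {e : Finset ℕ} :
    e ∈ edges K ↔ ∃ t ∈ K, e ⊆ t ∧ e.card = 2 := by
  simp [edges, Finset.mem_biUnion, Finset.mem_powersetCard]

lemma mem_vertices {K : Complex} {v : ℕ} :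
    v ∈ vertices K ↔ ∃ t ∈ K, v ∈ t := by
  simp [vertices, Finset.mem_biUnion]

lemma edges_mono {K₁ K₂ : Complex} (h : K₁ ⊆ K₂) : edges K₁ ⊆ edges K₂ := by
  intro e he; rw [mem_edges] at *; obtain ⟨t, ht, h1, h2⟩ := he; exact ⟨t, h ht, h1, h2⟩

lemma adjAt_symm {K : Complex} {v : ℕ} : Symmetric (adjAt K v) := by
  intro a b ⟨h1, h2, h3, h4, h5⟩
  exact ⟨h2, h1, h4, h3, by rwa [Finset.inter_comm]⟩

/-- two distinct triangles sharing an edge intersect in exactly that edge -/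
lemma inter_card_two {G : Complex} (hG : IsSurface G) {s u e : Finset ℕ}
    (hs : s ∈ G) (hu : u ∈ G) (hsu : s ≠ u) (hes : e ⊆ s) (heu : e ⊆ u)
    (he : e.card = 2) : (s ∩ u).card = 2 := by
  have h1 : e ⊆ s ∩ u := Finset.subset_inter hes heu
  have h2 : (s ∩ u).card ≤ 3 := by
    calc (s ∩ u).card ≤ s.card := Finset.card_le_card (Finset.inter_subset_left)
    _ = 3 := hG.card3 s hs
  have h3 : 2 ≤ (s ∩ u).card := he ▸ Finset.card_le_card h1
  interval_cases h : (s ∩ u).card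
  · rfl
  · exfalso
    have hsub : s ⊆ u := by
      have : s ∩ u = s := Finset.eq_of_subset_of_card_le Finset.inter_subset_left
        (by rw [hG.card3 s hs, h])
      rw [← this]; exact Finset.inter_subset_right
    exact hsu (Finset.eq_of_subset_of_card_le hsub (by rw [hG.card3 s hs, hG.card3 u hu]))

/-- an edge of G through a non-boundary vertex lies in exactly 2 triangles of G -/
lemma int_edge_two {G : Complex} (hG : IsSurface G) {e : Finset ℕ} {v : ℕ}
    (he : e ∈ edges G) (hve : v ∈ e) (hv : v ∉ bdryVertices G) :
    (G.filter (fun t => e ⊆ t)).card = 2 := by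
  have hle := hG.edge_le e he
  have hge : 1 ≤ (G.filter (fun t => e ⊆ t)).card := by
    obtain ⟨t, ht, h1, _⟩ := mem_edges.1 he
    exact Finset.card_pos.2 ⟨t, Finset.mem_filter.2 ⟨ht, h1⟩⟩
  rcases Nat.lt_or_ge (G.filter (fun t => e ⊆ t)).card 2 with h | h
  · exfalso
    apply hv
    have : e ∈ bdryEdges G := by
      rw [bdryEdges, Finset.mem_filter]
      exact ⟨he, by omega⟩
    exact Finset.mem_biUnion.2 ⟨e, this, hve⟩
  · omega
lemma even_card_of_invol {α : Type*} [DecidableEq α] (s : Finset α) (f : α → α)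
    (hmem : ∀ x ∈ s, f x ∈ s) (hinv : ∀ x ∈ s, f (f x) = x) (hne : ∀ x ∈ s, f x ≠ x) :
    Even s.card := by
  induction s using Finset.strongInduction with
  | _ s ih =>
    rcases s.eq_empty_or_nonempty with rfl | ⟨x, hx⟩
    · simp
    · have hfx : f x ∈ s := hmem x hx
      have hfxne : f x ≠ x := hne x hx
      set s' := (s.erase x).erase (f x) with hs'
      have hsub : s' ⊂ s := by
        apply Finset.ssubset_of_subset_of_ssubset (Finset.erase_subset _ _)
        exact Finset.erase_ssubset hx
      have hmem' : ∀ y ∈ s', y ∈ s ∧ y ≠ x ∧ y ≠ f x := by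
        intro y hy
        simp only [hs', Finset.mem_erase] at hy
        exact ⟨hy.2.2, hy.2.1, hy.1⟩
      have hcard : s.card = s'.card + 2 := by
        rw [hs', Finset.card_erase_of_mem (Finset.mem_erase.2 ⟨hfxne, hfx⟩),
          Finset.card_erase_of_mem hx]
        have : 2 ≤ s.card := Finset.one_lt_card.2 ⟨f x, hfx, x, hx, hfxne⟩
        omega
      have := ih s' hsub (fun y hy => by
          obtain ⟨hys, hyx, hyfx⟩ := hmem' y hy
          simp only [hs', Finset.mem_erase]
          refine ⟨?_, ?_, hmem y hys⟩
          · intro h; apply hyx; rw [← hinv y hys, h, hinv x hx]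
          · intro h; apply hyfx; rw [← hinv y hys, h])
        (fun y hy => hinv y (hmem' y hy).1) (fun y hy => hne y (hmem' y hy).1)
      rw [hcard]
      obtain ⟨k, hk⟩ := this
      exact ⟨k + 1, by omega⟩
/-- around a non-boundary vertex, each triangle has exactly two edge-neighbours -/
lemma nbrs_card {G : Complex} (hG : IsSurface G) {v : ℕ} {s : Finset ℕ}
    (hs : s ∈ G) (hvs : v ∈ s) (hv : v ∉ bdryVertices G) :
    (G.filter (fun u => v ∈ u ∧ u ≠ s ∧ (s ∩ u).card = 2)).card = 2 := by
  have hcard3 := hG.card3 s hs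
  have htarget : (s.erase v).card = 2 := by rw [Finset.card_erase_of_mem hvs, hcard3]
  suffices h : (G.filter (fun u => v ∈ u ∧ u ≠ s ∧ (s ∩ u).card = 2)).card = (s.erase v).card by
    rw [h, htarget]
  -- key facts about members of the filter
  have key : ∀ u ∈ G.filter (fun u => v ∈ u ∧ u ≠ s ∧ (s ∩ u).card = 2),
      ((s ∩ u).erase v).Nonempty ∧ ∀ x ∈ (s ∩ u).erase v, s ∩ u = {v, x} := by
    intro u hu
    rw [Finset.mem_filter] at hu
    obtain ⟨huG, hvu, huns, hcard⟩ := hu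
    have hvin : v ∈ s ∩ u := Finset.mem_inter.2 ⟨hvs, hvu⟩
    have hec : ((s ∩ u).erase v).card = 1 := by
      rw [Finset.card_erase_of_mem hvin, hcard]
    obtain ⟨x, hx⟩ := Finset.card_eq_one.1 hec
    refine ⟨⟨x, hx ▸ Finset.mem_singleton_self x⟩, ?_⟩
    intro y hy
    rw [hx, Finset.mem_singleton] at hy
    subst hy
    have : insert v ((s ∩ u).erase v) = s ∩ u := Finset.insert_erase hvin
    rw [← this, hx]
  -- uniqueness of the second triangle over an edge
  have uniq : ∀ e, e.card = 2 → v ∈ e → e ⊆ s →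
      ∀ u₁ ∈ G, ∀ u₂ ∈ G, u₁ ≠ s → u₂ ≠ s → e ⊆ u₁ → e ⊆ u₂ → u₁ = u₂ := by
    intro e hec hve hes u₁ hu₁ u₂ hu₂ h1s h2s he1 he2
    have heG : e ∈ edges G := mem_edges.2 ⟨s, hs, hes, hec⟩
    have h2 := int_edge_two hG heG hve hv
    by_contra hne
    have : ({s, u₁, u₂} : Finset (Finset ℕ)) ⊆ G.filter (fun t => e ⊆ t) := by
      intro z hz
      simp only [Finset.mem_insert, Finset.mem_singleton] at hz
      rcases hz with rfl | rfl | rfl <;> exact Finset.mem_filter.2 (by tauto)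
    have hle := Finset.card_le_card this
    rw [h2] at hle
    have hexp : ({s, u₁, u₂} : Finset (Finset ℕ)).card = 3 := by
      rw [Finset.card_insert_of_notMem (by simp [Ne.symm h1s, Ne.symm h2s]),
        Finset.card_insert_of_notMem (by simp [hne])]
      simp
    omega
  apply Finset.card_bij (fun u _ => ((s ∩ u).erase v).min' (by
    exact (key u (by assumption)).1))
  · -- maps into s.erase v
    intro u hu
    have hk := key u hu
    have hmin := Finset.min'_mem ((s ∩ u).erase v) hk.1
    have := Finset.mem_erase.1 hmin
    exact Finset.mem_erase.2 ⟨this.1, (Finset.mem_inter.1 (Finset.mem_of_mem_erase hmin)).1⟩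
  · -- injective
    intro u₁ hu₁ u₂ hu₂ heq
    have hk₁ := key u₁ hu₁; have hk₂ := key u₂ hu₂
    set x := ((s ∩ u₁).erase v).min' hk₁.1 with hx
    have he₁ : s ∩ u₁ = {v, x} := hk₁.2 _ (Finset.min'_mem _ _)
    have he₂ : s ∩ u₂ = {v, x} := by
      rw [heq]; exact hk₂.2 _ (Finset.min'_mem _ _)
    rw [Finset.mem_filter] at hu₁ hu₂
    have hxv : x ≠ v := (Finset.mem_erase.1 (Finset.min'_mem _ hk₁.1)).1
    have hec : ({v, x} : Finset ℕ).card = 2 := by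
      rw [Finset.card_insert_of_notMem (by simp [Ne.symm hxv])]; simp
    exact uniq {v, x} hec (by simp) (he₁ ▸ Finset.inter_subset_left)
      u₁ hu₁.1 u₂ hu₂.1 hu₁.2.2.1 hu₂.2.2.1
      (he₁ ▸ Finset.inter_subset_right) (he₂ ▸ Finset.inter_subset_right)
  · -- surjective
    intro x hx
    rw [Finset.mem_erase] at hx
    obtain ⟨hxv, hxs⟩ := hx
    set e : Finset ℕ := {v, x} with he
    have hes : e ⊆ s := by
      intro z hz; simp only [he, Finset.mem_insert, Finset.mem_singleton] at hz
      rcases hz with rfl | rfl; exacts [hvs, hxs]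
    have hec : e.card = 2 := by
      rw [he, Finset.card_insert_of_notMem (by simp [Ne.symm hxv])]; simp
    have heG : e ∈ edges G := mem_edges.2 ⟨s, hs, hes, hec⟩
    have h2 := int_edge_two hG heG (by simp [he]) hv
    have hsf : s ∈ G.filter (fun t => e ⊆ t) := Finset.mem_filter.2 ⟨hs, hes⟩
    have hpos : 0 < ((G.filter (fun t => e ⊆ t)).erase s).card := by
      rw [Finset.card_erase_of_mem hsf, h2]; omega
    obtain ⟨u, hu⟩ := Finset.card_pos.1 hpos
    rw [Finset.mem_erase, Finset.mem_filter] at hu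
    obtain ⟨hus, huG, hue⟩ := hu
    have hinter : (s ∩ u).card = 2 := inter_card_two hG hs huG (Ne.symm hus) hes hue hec
    have hueq : s ∩ u = e := by
      refine (Finset.eq_of_subset_of_card_le (Finset.subset_inter hes hue) ?_).symm
      rw [hinter, hec]
    refine ⟨u, Finset.mem_filter.2 ⟨huG, hue (by simp [he]), hus, hinter⟩, ?_⟩
    have hxe : (s ∩ u).erase v = {x} := by
      rw [hueq, he]
      exact Finset.erase_insert (by simp [Ne.symm hxv])
    simp [hxe]
lemma rtg_symm {r : Finset ℕ → Finset ℕ → Prop} (h : Symmetric r) :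
    Symmetric (Relation.ReflTransGen r) := fun _ _ hab =>
  by haveI : Std.Symm r := ⟨fun a b => @h a b⟩; exact Relation.ReflTransGen.symmetric.symm _ _ hab

lemma cycle_lemma {G : Complex} (hG : IsSurface G) {v : ℕ} {t : Finset ℕ}
    (ht : t ∈ G) (hvt : v ∈ t) (hv : v ∉ bdryVertices G) :
    ∀ t₁ ∈ G.erase t, ∀ t₂ ∈ G.erase t, v ∈ t₁ → v ∈ t₂ →
      Relation.ReflTransGen (adjAt (G.erase t) v) t₁ t₂ := by
  classical
  set R := adjAt (G.erase t) v with hR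
  set nbrsT := G.filter (fun u => v ∈ u ∧ u ≠ t ∧ (t ∩ u).card = 2) with hnbrsT
  have hnbrsT2 : nbrsT.card = 2 := nbrs_card hG ht hvt hv
  -- the component of x contains all neighbours of t
  have claim : ∀ x ∈ G.erase t, v ∈ x → ∀ a ∈ nbrsT,
      a ∈ (G.erase t).filter (fun u => v ∈ u ∧ Relation.ReflTransGen R x u) := by
    intro x hx hvx
    set C := (G.erase t).filter (fun u => v ∈ u ∧ Relation.ReflTransGen R x u) with hC
    have hxC : x ∈ C := by
      rw [hC, Finset.mem_filter]; exact ⟨hx, hvx, Relation.ReflTransGen.refl⟩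
    have hCsub : ∀ u ∈ C, u ∈ G ∧ u ≠ t ∧ v ∈ u ∧ Relation.ReflTransGen R x u := by
      intro u hu
      rw [hC, Finset.mem_filter, Finset.mem_erase] at hu
      exact ⟨hu.1.2, hu.1.1, hu.2⟩
    have closure : ∀ u ∈ C, ∀ w ∈ G, w ≠ t → v ∈ w → (u ∩ w).card = 2 → w ∈ C := by
      intro u hu w hw hwt hvw hcard
      obtain ⟨huG, hut, hvu, hpath⟩ := hCsub u hu
      rw [hC, Finset.mem_filter, Finset.mem_erase]
      refine ⟨⟨hwt, hw⟩, hvw, hpath.tail ?_⟩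
      exact ⟨Finset.mem_erase.2 ⟨hut, huG⟩, Finset.mem_erase.2 ⟨hwt, hw⟩, hvu, hvw, hcard⟩
    -- degrees within C
    have hdeg : ∀ s ∈ C, (C.filter (fun u => u ≠ s ∧ (s ∩ u).card = 2)).card
        + (if s ∈ nbrsT then 1 else 0) = 2 := by
      intro s hsC
      obtain ⟨hsG, hst, hvs, _⟩ := hCsub s hsC
      set Ns := G.filter (fun u => v ∈ u ∧ u ≠ s ∧ (s ∩ u).card = 2) with hNs
      have hNs2 : Ns.card = 2 := nbrs_card hG hsG hvs hv
      have hfe : C.filter (fun u => u ≠ s ∧ (s ∩ u).card = 2) = Ns.erase t := by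
        ext u
        constructor
        · intro hu
          rw [Finset.mem_filter] at hu
          obtain ⟨huC, hus, hcard⟩ := hu
          obtain ⟨huG, hut, hvu, _⟩ := hCsub u huC
          exact Finset.mem_erase.2 ⟨hut, Finset.mem_filter.2 ⟨huG, hvu, hus, hcard⟩⟩
        · intro hu
          rw [Finset.mem_erase, Finset.mem_filter] at hu
          obtain ⟨hut, huG, hvu, hus, hcard⟩ := hu
          exact Finset.mem_filter.2 ⟨closure s hsC u huG hut hvu hcard, hus, hcard⟩
      rw [hfe]
      by_cases hmem : s ∈ nbrsT
      · have htNs : t ∈ Ns := by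
          rw [hnbrsT, Finset.mem_filter] at hmem
          rw [hNs, Finset.mem_filter]
          exact ⟨ht, hvt, Ne.symm hmem.2.2.1, by rw [Finset.inter_comm]; exact hmem.2.2.2⟩
        rw [Finset.card_erase_of_mem htNs, hNs2, if_pos hmem]
      · have htNs : t ∉ Ns := by
          intro htn
          apply hmem
          rw [hNs, Finset.mem_filter] at htn
          rw [hnbrsT, Finset.mem_filter]
          exact ⟨hsG, hvs, hst, by rw [Finset.inter_comm]; exact htn.2.2.2⟩
        rw [Finset.erase_eq_of_notMem htNs, hNs2, if_neg hmem]
    -- handshake: the sum of degrees within C is even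
    have heven : Even (∑ s ∈ C, (C.filter (fun u => u ≠ s ∧ (s ∩ u).card = 2)).card) := by
      rw [← Finset.card_sigma]
      apply even_card_of_invol _ (fun p => ⟨p.2, p.1⟩)
      · intro p hp
        simp only [Finset.mem_sigma, Finset.mem_filter] at hp
        obtain ⟨h1, h2, h3, h4⟩ := hp
        refine Finset.mem_sigma.2 ⟨h2, Finset.mem_filter.2 ⟨h1, Ne.symm h3, ?_⟩⟩
        rwa [Finset.inter_comm]
      · intro p _; rfl
      · intro p hp hfp
        simp only [Finset.mem_sigma, Finset.mem_filter] at hp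
        have : p.2 = p.1 := congrArg Sigma.fst hfp
        exact hp.2.2.1 this
    -- conclude |C ∩ nbrsT| is even
    have hsum : (∑ s ∈ C, (C.filter (fun u => u ≠ s ∧ (s ∩ u).card = 2)).card)
        + (C.filter (fun s => s ∈ nbrsT)).card = 2 * C.card := by
      rw [Finset.card_filter, ← Finset.sum_add_distrib,
        Finset.sum_congr rfl hdeg, Finset.sum_const, smul_eq_mul, mul_comm]
    have hevenCT : Even (C.filter (fun s => s ∈ nbrsT)).card := by
      obtain ⟨k, hk⟩ := heven
      exact ⟨C.card - k, by omega⟩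
    -- |C ∩ nbrsT| ≥ 1
    have hpos : (C.filter (fun s => s ∈ nbrsT)).Nonempty := by
      have aux : ∀ y, Relation.ReflTransGen (adjAt G v) y t → y ∈ C →
          (C.filter (fun s => s ∈ nbrsT)).Nonempty := by
        intro y hpath
        induction hpath using Relation.ReflTransGen.head_induction_on with
        | refl =>
          intro htC
          exact absurd rfl (hCsub t htC).2.1
        | head hyz htail ih =>
          rename_i y' z'
          intro hyC
          by_cases hzt : z' = t
          · subst hzt
            refine ⟨y', Finset.mem_filter.2 ⟨hyC, ?_⟩⟩
            rw [hnbrsT, Finset.mem_filter]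
            exact ⟨hyz.1, hyz.2.2.1, (hCsub y' hyC).2.1,
              by rw [Finset.inter_comm]; exact hyz.2.2.2.2⟩
          · exact ih (closure y' hyC z' hyz.2.1 hzt hyz.2.2.2.1 hyz.2.2.2.2)
      exact aux x (hG.link_conn v x (Finset.mem_of_mem_erase hx) t ht hvx hvt) hxC
    -- |C ∩ nbrsT| ≤ 2 and even and ≥ 1, hence = 2, hence = nbrsT
    have hsubCT : C.filter (fun s => s ∈ nbrsT) ⊆ nbrsT := by
      intro z hz; exact (Finset.mem_filter.1 hz).2
    have hCTeq : C.filter (fun s => s ∈ nbrsT) = nbrsT := by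
      apply Finset.eq_of_subset_of_card_le hsubCT
      have hle : (C.filter (fun s => s ∈ nbrsT)).card ≤ 2 :=
        hnbrsT2 ▸ Finset.card_le_card hsubCT
      have hge : 1 ≤ (C.filter (fun s => s ∈ nbrsT)).card := Finset.card_pos.2 hpos
      obtain ⟨k, hk⟩ := hevenCT
      omega
    intro a ha
    rw [← hCTeq] at ha
    exact (Finset.mem_filter.1 ha).1
  -- conclude
  intro t₁ h₁ t₂ h₂ hv₁ hv₂
  have hne : nbrsT.Nonempty := Finset.card_pos.1 (by omega)
  obtain ⟨a, ha⟩ := hne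
  have c₁ := claim t₁ h₁ hv₁ a ha
  have c₂ := claim t₂ h₂ hv₂ a ha
  have p₁ : Relation.ReflTransGen R t₁ a := (Finset.mem_filter.1 c₁).2.2
  have p₂ : Relation.ReflTransGen R t₂ a := (Finset.mem_filter.1 c₂).2.2
  exact p₁.trans (rtg_symm (by rw [hR]; exact adjAt_symm) p₂)
lemma second_triangle {G : Complex} (hG : IsSurface G) {t : Finset ℕ} (ht : t ∈ G)
    (hbt : ∀ w ∈ t, w ∉ bdryVertices G) {e : Finset ℕ} (he : e ⊆ t) (hec : e.card = 2) :
    ∃ s ∈ G.erase t, e ⊆ s := by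
  have heG : e ∈ edges G := mem_edges.2 ⟨t, ht, he, hec⟩
  obtain ⟨v, hv⟩ := Finset.card_pos.1 (by omega : 0 < e.card)
  have h2 := int_edge_two hG heG hv (hbt v (he hv))
  have htf : t ∈ G.filter (fun s => e ⊆ s) := Finset.mem_filter.2 ⟨ht, he⟩
  have hpos : 0 < ((G.filter (fun s => e ⊆ s)).erase t).card := by
    rw [Finset.card_erase_of_mem htf, h2]; omega
  obtain ⟨s, hs⟩ := Finset.card_pos.1 hpos
  rw [Finset.mem_erase, Finset.mem_filter] at hs
  exact ⟨s, Finset.mem_erase.2 ⟨hs.1, hs.2.1⟩, hs.2.2⟩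

/-- two 2-element subsets of a 3-element set intersect -/
lemma pair_inter_nonempty {t e₁ e₂ : Finset ℕ} (ht : t.card = 3)
    (h1 : e₁ ⊆ t) (h2 : e₂ ⊆ t) (hc1 : e₁.card = 2) (hc2 : e₂.card = 2) :
    (e₁ ∩ e₂).Nonempty := by
  have hu : (e₁ ∪ e₂).card ≤ 3 := ht ▸ Finset.card_le_card (Finset.union_subset h1 h2)
  have := Finset.card_union_add_card_inter e₁ e₂
  rw [← Finset.card_pos]
  omega

lemma rtg_adjAt_adj {K : Complex} {v : ℕ} {a b : Finset ℕ}
    (h : Relation.ReflTransGen (adjAt K v) a b) : Relation.ReflTransGen (adj K) a b :=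
  Relation.ReflTransGen.mono (r := adjAt K v) (p := adj K) (fun _ _ h => ⟨h.1, h.2.1, h.2.2.2.2⟩) a b h

lemma erase_surface {G : Complex} (hG : IsSurface G) {t : Finset ℕ} (ht : t ∈ G)
    (hbt : ∀ w ∈ t, w ∉ bdryVertices G) : IsSurface (G.erase t) := by
  have htc := hG.card3 t ht
  constructor
  · -- nonempty
    obtain ⟨e, he, hec⟩ := Finset.exists_subset_card_eq (s := t) (n := 2) (by omega)
    obtain ⟨s, hs, _⟩ := second_triangle hG ht hbt he hec
    exact ⟨s, hs⟩
  · exact fun s hs => hG.card3 s (Finset.mem_of_mem_erase hs)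
  · intro e he
    calc ((G.erase t).filter (fun s => e ⊆ s)).card
        ≤ (G.filter (fun s => e ⊆ s)).card :=
          Finset.card_le_card (Finset.monotone_filter_left _ (Finset.erase_subset t G))
      _ ≤ 2 := hG.edge_le e (edges_mono (Finset.erase_subset t G) he)
  · -- link_conn
    intro w t₁ h₁ t₂ h₂ hw₁ hw₂
    by_cases hwt : w ∈ t
    · exact cycle_lemma hG ht hwt (hbt w hwt) t₁ h₁ t₂ h₂ hw₁ hw₂
    · have hpath := hG.link_conn w t₁ (Finset.mem_of_mem_erase h₁) t₂
        (Finset.mem_of_mem_erase h₂) hw₁ hw₂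
      clear h₂ hw₂
      induction hpath with
      | refl => exact Relation.ReflTransGen.refl
      | tail hab hbc ih =>
        refine ih.tail ?_
        exact ⟨Finset.mem_erase.2 ⟨fun h => hwt (h ▸ hbc.2.2.1), hbc.1⟩,
          Finset.mem_erase.2 ⟨fun h => hwt (h ▸ hbc.2.2.2.1), hbc.2.1⟩,
          hbc.2.2.1, hbc.2.2.2.1, hbc.2.2.2.2⟩
  · -- conn
    intro t₁ h₁ t₂ h₂
    -- rerouting around `t` between two triangles sharing an edge with `t`
    have reroute : ∀ z ∈ G.erase t, ∀ c ∈ G.erase t, (z ∩ t).card = 2 →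
        (c ∩ t).card = 2 → Relation.ReflTransGen (adj (G.erase t)) z c := by
      intro z hz c hc hzc hcc
      obtain ⟨w, hw⟩ := pair_inter_nonempty htc
        (Finset.inter_subset_right : z ∩ t ⊆ t) (Finset.inter_subset_right : c ∩ t ⊆ t) hzc hcc
      rw [Finset.mem_inter, Finset.mem_inter, Finset.mem_inter] at hw
      obtain ⟨⟨hwz, hwt⟩, hwc, _⟩ := hw
      exact rtg_adjAt_adj (cycle_lemma hG ht hwt (hbt w hwt) z hz c hc hwz hwc)
    have main : ∀ y, Relation.ReflTransGen (adj G) y t₂ →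
        ∀ z ∈ G.erase t, (z = y ∨ (y = t ∧ (z ∩ t).card = 2)) →
        Relation.ReflTransGen (adj (G.erase t)) z t₂ := by
      intro y hpath
      induction hpath using Relation.ReflTransGen.head_induction_on with
      | refl =>
        intro z hz hcase
        rcases hcase with rfl | ⟨h2t, _⟩
        · exact Relation.ReflTransGen.refl
        · exact absurd h2t (Finset.mem_erase.1 h₂).1
      | head hyz htail ih =>
        rename_i y' c'
        intro z hz hcase
        rcases hcase with rfl | ⟨hyt, hzt2⟩
        · by_cases hct : c' = t
          · refine ih z hz (Or.inr ⟨hct, ?_⟩)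
            rw [← hct]; exact hyz.2.2
          · have hc'mem : c' ∈ G.erase t := Finset.mem_erase.2 ⟨hct, hyz.2.1⟩
            exact Relation.ReflTransGen.head ⟨hz, hc'mem, hyz.2.2⟩
              (ih c' hc'mem (Or.inl rfl))
        · have h22 : (t ∩ c').card = 2 := by rw [← hyt]; exact hyz.2.2
          have hct : c' ≠ t := by
            intro h
            rw [h, Finset.inter_self, htc] at h22
            omega
          have hc'mem : c' ∈ G.erase t := Finset.mem_erase.2 ⟨hct, hyz.2.1⟩
          have hcc : (c' ∩ t).card = 2 := by rw [Finset.inter_comm]; exact h22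
          exact (reroute z hz c' hc'mem hzt2 hcc).trans (ih c' hc'mem (Or.inl rfl))
    exact main t₁ (hG.conn t₁ (Finset.mem_of_mem_erase h₁) t₂ (Finset.mem_of_mem_erase h₂))
      t₁ h₁ (Or.inl rfl)
lemma vertices_mono {K₁ K₂ : Complex} (h : K₁ ⊆ K₂) : vertices K₁ ⊆ vertices K₂ := by
  intro v hv
  obtain ⟨s, hs, hvs⟩ := mem_vertices.1 hv
  exact mem_vertices.2 ⟨s, h hs, hvs⟩

/-- an edge shared by G and a disjoint subcomplex of a closed surface is a boundary edge -/
lemma shared_edge_bdry {K G X : Complex} (hK : IsClosedSurface K) (hGK : G ⊆ K)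
    (hXK : X ⊆ K) (hdisj : Disjoint G X) {e : Finset ℕ}
    (heG : e ∈ edges G) (heX : e ∈ edges X) : e ∈ bdryEdges G := by
  obtain ⟨d, hdX, hed, hec⟩ := mem_edges.1 heX
  have heK : e ∈ edges K := mem_edges.2 ⟨d, hXK hdX, hed, hec⟩
  have h2 := hK.2 e heK
  have hdG : d ∉ G := fun h => (Finset.disjoint_left.1 hdisj h) hdX
  have hdK : d ∈ K.filter (fun s => e ⊆ s) := Finset.mem_filter.2 ⟨hXK hdX, hed⟩
  have hsub : G.filter (fun s => e ⊆ s) ⊆ (K.filter (fun s => e ⊆ s)).erase d := by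
    intro s hs
    rw [Finset.mem_filter] at hs
    exact Finset.mem_erase.2 ⟨fun h => hdG (h ▸ hs.1), Finset.mem_filter.2 ⟨hGK hs.1, hs.2⟩⟩
  have hle : (G.filter (fun s => e ⊆ s)).card ≤ 1 := by
    have := Finset.card_le_card hsub
    rw [Finset.card_erase_of_mem hdK, h2] at this
    exact this
  have hge : 1 ≤ (G.filter (fun s => e ⊆ s)).card := by
    obtain ⟨s, hsG, hes, _⟩ := mem_edges.1 heG
    exact Finset.card_pos.2 ⟨s, Finset.mem_filter.2 ⟨hsG, hes⟩⟩
  exact Finset.mem_filter.2 ⟨heG, le_antisymm hle hge⟩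

lemma triangle_circle {t : Finset ℕ} (htc : t.card = 3) : IsCircle (t.powersetCard 2) := by
  refine ⟨?_, ?_, ?_, ?_⟩
  · rw [← Finset.card_pos, Finset.card_powersetCard, htc]
    decide
  · exact fun e he => (Finset.mem_powersetCard.1 he).2
  · intro v hv
    obtain ⟨e, he, hve⟩ := Finset.mem_biUnion.1 hv
    have hvt : v ∈ t := (Finset.mem_powersetCard.1 he).1 hve
    have himg : (t.powersetCard 2).filter (fun e => v ∈ e)
        = (t.erase v).image (fun x => ({v, x} : Finset ℕ)) := by
      ext f
      simp only [Finset.mem_filter, Finset.mem_powersetCard, Finset.mem_image,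
        Finset.mem_erase]
      constructor
      · rintro ⟨⟨hft, hfc⟩, hvf⟩
        obtain ⟨a, b, hab, rfl⟩ := Finset.card_eq_two.1 hfc
        rcases Finset.mem_insert.1 hvf with rfl | hvb
        · exact ⟨b, ⟨Ne.symm hab, hft (by simp)⟩, rfl⟩
        · rw [Finset.mem_singleton] at hvb
          subst hvb
          exact ⟨a, ⟨hab, hft (by simp)⟩, by rw [Finset.pair_comm]⟩
      · rintro ⟨x, ⟨hxv, hxt⟩, rfl⟩
        refine ⟨⟨?_, ?_⟩, by simp⟩
        · intro z hz
          rcases Finset.mem_insert.1 hz with rfl | hz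
          · exact hvt
          · rw [Finset.mem_singleton] at hz; exact hz ▸ hxt
        · rw [Finset.card_insert_of_notMem (by simp [Ne.symm hxv])]; simp
    rw [himg, Finset.card_image_of_injOn, Finset.card_erase_of_mem hvt, htc]
    intro a ha b hb hab
    simp only at hab
    have : a ∈ ({v, b} : Finset ℕ) := by rw [← hab]; simp
    rcases Finset.mem_insert.1 this with rfl | h
    · exact absurd rfl (Finset.mem_erase.1 ha).1
    · exact Finset.mem_singleton.1 h
  · intro e₁ h₁ e₂ h₂
    rcases eq_or_ne e₁ e₂ with rfl | hne
    · exact Relation.ReflTransGen.refl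
    · refine Relation.ReflTransGen.single ⟨h₁, h₂, ?_⟩
      obtain ⟨hs₁, hc₁⟩ := Finset.mem_powersetCard.1 h₁
      obtain ⟨hs₂, hc₂⟩ := Finset.mem_powersetCard.1 h₂
      exact pair_inter_nonempty htc hs₁ hs₂ hc₁ hc₂

lemma singleton_disc {t : Finset ℕ} (htc : t.card = 3) : IsDisc {t} := by
  have hedges : edges {t} = t.powersetCard 2 := Finset.singleton_biUnion
  have hverts : vertices {t} = t := Finset.singleton_biUnion
  refine ⟨⟨⟨t, Finset.mem_singleton_self t⟩, ?_, ?_, ?_, ?_⟩, ?_, ?_⟩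
  · intro s hs; rw [Finset.mem_singleton] at hs; exact hs ▸ htc
  · intro e _
    calc (Finset.filter (fun s => e ⊆ s) {t}).card ≤ ({t} : Complex).card :=
        Finset.card_le_card (Finset.filter_subset _ _)
      _ ≤ 2 := by simp
  · intro v t₁ h₁ t₂ h₂ _ _
    rw [Finset.mem_singleton] at h₁ h₂
    rw [h₁, h₂]
  · intro t₁ h₁ t₂ h₂
    rw [Finset.mem_singleton] at h₁ h₂
    rw [h₁, h₂]
  · rw [eulerChar, hedges, hverts, Finset.card_powersetCard, htc]
    simp
  · obtain ⟨e, he, hec⟩ := Finset.exists_subset_card_eq (show 2 ≤ t.card by omega)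
    refine ⟨e, Finset.mem_filter.2 ⟨?_, ?_⟩⟩
    · rw [hedges]; exact Finset.mem_powersetCard.2 ⟨he, hec⟩
    · have : Finset.filter (fun s => e ⊆ s) {t} = {t} := by
        apply Finset.filter_true_of_mem
        intro s hs; rw [Finset.mem_singleton] at hs; exact hs ▸ he
      rw [this]; simp
  
lemma circleInter_symm {A B : Complex} (h : CircleInter A B) : CircleInter B A := by
  obtain ⟨h1, h2⟩ := h
  constructor
  · rw [Finset.inter_comm]; exact h1
  · rw [Finset.inter_comm, Finset.inter_comm (edges B)]; exact h2
lemma circleInter_erase {K G X : Complex} (hK : IsClosedSurface K) (hG : IsSurface G)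
    (hGK : G ⊆ K) (hXK : X ⊆ K) (hdisj : Disjoint G X) {t : Finset ℕ} (ht : t ∈ G)
    (hbt : ∀ w ∈ t, w ∉ bdryVertices G) (hCI : CircleInter G X) :
    CircleInter (G.erase t) X := by
  have hedges : edges (G.erase t) ∩ edges X = edges G ∩ edges X := by
    apply subset_antisymm
    · exact Finset.inter_subset_inter (edges_mono (Finset.erase_subset t G)) subset_rfl
    · intro e he
      obtain ⟨heG, heX⟩ := Finset.mem_inter.1 he
      have hbdry : e ∈ bdryEdges G := shared_edge_bdry hK hGK hXK hdisj heG heX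
      obtain ⟨s, hsG, hes, hec⟩ := mem_edges.1 heG
      have hent : ¬ e ⊆ t := by
        intro hsub
        obtain ⟨w, hw⟩ := Finset.card_pos.1 (by omega : 0 < e.card)
        exact hbt w (hsub hw) (Finset.mem_biUnion.2 ⟨e, hbdry, hw⟩)
      have hst : s ≠ t := fun h => hent (h ▸ hes)
      exact Finset.mem_inter.2
        ⟨mem_edges.2 ⟨s, Finset.mem_erase.2 ⟨hst, hsG⟩, hes, hec⟩, heX⟩
  have hverts : vertices (G.erase t) ∩ vertices X = vertices G ∩ vertices X := by
    apply subset_antisymm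
    · exact Finset.inter_subset_inter (vertices_mono (Finset.erase_subset t G)) subset_rfl
    · intro w hw
      have hw' : w ∈ (edges G ∩ edges X).biUnion id := hCI.2 ▸ hw
      obtain ⟨e, he, hwe⟩ := Finset.mem_biUnion.1 hw'
      have he' : e ∈ edges (G.erase t) ∩ edges X := hedges ▸ he
      obtain ⟨s, hs, hes, _⟩ := mem_edges.1 (Finset.mem_inter.1 he').1
      exact Finset.mem_inter.2
        ⟨mem_vertices.2 ⟨s, hs, hes hwe⟩, (Finset.mem_inter.1 hw).2⟩
  exact ⟨by rw [hedges]; exact hCI.1, by rw [hedges, hverts]; exact hCI.2⟩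

/-- the erased complex meets the singleton `{t}` in the boundary circle of `t` -/
lemma circleInter_erase_singleton {G : Complex} (hG : IsSurface G) {t : Finset ℕ}
    (ht : t ∈ G) (hbt : ∀ w ∈ t, w ∉ bdryVertices G) :
    CircleInter (G.erase t) {t} := by
  have htc := hG.card3 t ht
  have hedges : edges ({t} : Complex) = t.powersetCard 2 := Finset.singleton_biUnion
  have hverts : vertices ({t} : Complex) = t := Finset.singleton_biUnion
  have hE : edges (G.erase t) ∩ edges {t} = t.powersetCard 2 := by
    apply subset_antisymm
    · rw [hedges]; exact Finset.inter_subset_right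
    · intro e he
      obtain ⟨hes, hec⟩ := Finset.mem_powersetCard.1 he
      obtain ⟨s, hs, hes'⟩ := second_triangle hG ht hbt hes hec
      exact Finset.mem_inter.2 ⟨mem_edges.2 ⟨s, hs, hes', hec⟩, hedges ▸ he⟩
  have hBi : (t.powersetCard 2).biUnion id = t := by
    apply subset_antisymm
    · intro w hw
      obtain ⟨e, he, hwe⟩ := Finset.mem_biUnion.1 hw
      exact (Finset.mem_powersetCard.1 he).1 hwe
    · intro w hw
      obtain ⟨x, hx⟩ := Finset.card_pos.1
        (by rw [Finset.card_erase_of_mem hw, htc]; omega : 0 < (t.erase w).card)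
      obtain ⟨hxw, hxt⟩ := Finset.mem_erase.1 hx
      refine Finset.mem_biUnion.2 ⟨{w, x}, Finset.mem_powersetCard.2 ⟨?_, ?_⟩, by simp⟩
      · intro z hz
        rcases Finset.mem_insert.1 hz with rfl | hz
        · exact hw
        · exact (Finset.mem_singleton.1 hz) ▸ hxt
      · rw [Finset.card_insert_of_notMem (by simp [Ne.symm hxw])]; simp
  constructor
  · rw [hE]; exact Or.inl (triangle_circle htc)
  · rw [hE, hBi, hverts]
    apply subset_antisymm
    · exact Finset.inter_subset_right
    · intro w hw
      obtain ⟨x, hx⟩ := Finset.card_pos.1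
        (by rw [Finset.card_erase_of_mem hw, htc]; omega : 0 < (t.erase w).card)
      obtain ⟨hxw, hxt⟩ := Finset.mem_erase.1 hx
      have hesub : ({w, x} : Finset ℕ) ⊆ t := by
        intro z hz
        rcases Finset.mem_insert.1 hz with rfl | hz
        · exact hw
        · exact (Finset.mem_singleton.1 hz) ▸ hxt
      have hec : ({w, x} : Finset ℕ).card = 2 := by
        rw [Finset.card_insert_of_notMem (by simp [Ne.symm hxw])]; simp
      obtain ⟨s, hs, hes⟩ := second_triangle hG ht hbt hesub hec
      exact Finset.mem_inter.2 ⟨mem_vertices.2 ⟨s, hs, hes (by simp)⟩, hw⟩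

/-- a disjoint piece has empty intersection with the singleton `{t}` -/
lemma circleInter_piece_singleton {K G X : Complex} (hK : IsClosedSurface K)
    (hGK : G ⊆ K) (hXK : X ⊆ K) (hdisj : Disjoint G X) {t : Finset ℕ} (ht : t ∈ G)
    (hbt : ∀ w ∈ t, w ∉ bdryVertices G) (hCI : CircleInter G X) :
    CircleInter X {t} := by
  have hedges : edges ({t} : Complex) = t.powersetCard 2 := Finset.singleton_biUnion
  have hverts : vertices ({t} : Complex) = t := Finset.singleton_biUnion
  have hE : edges X ∩ edges {t} = ∅ := by
    rw [Finset.eq_empty_iff_forall_notMem]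
    intro e he
    obtain ⟨heX, het⟩ := Finset.mem_inter.1 he
    rw [hedges] at het
    obtain ⟨hes, hec⟩ := Finset.mem_powersetCard.1 het
    have heG : e ∈ edges G := mem_edges.2 ⟨t, ht, hes, hec⟩
    have hbdry := shared_edge_bdry hK hGK hXK hdisj heG heX
    obtain ⟨w, hw⟩ := Finset.card_pos.1 (by omega : 0 < e.card)
    exact hbt w (hes hw) (Finset.mem_biUnion.2 ⟨e, hbdry, hw⟩)
  have hV : vertices X ∩ vertices {t} = ∅ := by
    rw [Finset.eq_empty_iff_forall_notMem]
    intro w hw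
    obtain ⟨hwX, hwt⟩ := Finset.mem_inter.1 hw
    rw [hverts] at hwt
    have hwG : w ∈ vertices G := mem_vertices.2 ⟨t, ht, hwt⟩
    have : w ∈ (edges G ∩ edges X).biUnion id :=
      hCI.2 ▸ Finset.mem_inter.2 ⟨hwG, hwX⟩
    obtain ⟨e, he, hwe⟩ := Finset.mem_biUnion.1 this
    obtain ⟨heG, heX⟩ := Finset.mem_inter.1 he
    have hbdry := shared_edge_bdry hK hGK hXK hdisj heG heX
    exact hbt w hwt (Finset.mem_biUnion.2 ⟨e, hbdry, hwe⟩)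
  exact ⟨Or.inr hE, by rw [hE, hV]; simp⟩
/-- in a minimal decomposition, every triangle of the
genus-surface intersects its boundary. -/
theorem triangle_meets_boundary (K G D : Complex) (Ds : Finset Complex)
    (h : IsMinDecomp K G D Ds) :
    ∀ t ∈ G, ∃ v ∈ t, v ∈ bdryVertices G := by
  obtain ⟨hd, hmin⟩ := h
  intro t ht
  by_contra hcon
  push_neg at hcon
  have hbt : ∀ w ∈ t, w ∉ bdryVertices G := hcon
  have hG := hd.surfG
  have hK := hd.closed
  have htc := hG.card3 t ht
  have htK : t ∈ K := hd.subG ht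
  have htDs : ({t} : Complex) ∉ Ds := by
    intro hmem
    exact Finset.disjoint_left.1 (hd.disjGDs {t} hmem) ht (Finset.mem_singleton_self t)
  -- the new decomposition
  have hdecomp : IsDecomp K (G.erase t) D (insert {t} Ds) := by
    constructor
    · exact hd.closed
    · exact (Finset.erase_subset t G).trans hd.subG
    · exact hd.subD
    · intro Di hDi
      rcases Finset.mem_insert.1 hDi with rfl | hDi
      · exact Finset.singleton_subset_iff.2 htK
      · exact hd.subDs Di hDi
    · exact erase_surface hG ht hbt
    · exact hd.discD
    · intro Di hDi
      rcases Finset.mem_insert.1 hDi with rfl | hDi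
      · exact singleton_disc htc
      · exact hd.discDs Di hDi
    · exact hd.maxv
    · -- cover
      rw [Finset.sup_insert]
      have step1 : G.erase t ∪ D ∪ (id ({t} : Complex) ⊔ Ds.sup id)
          = (G.erase t ∪ {t}) ∪ (D ∪ Ds.sup id) := by
        ext x
        simp only [Finset.mem_union, id_eq, Finset.sup_eq_union, Finset.mem_union]
        tauto
      rw [step1, Finset.union_comm (G.erase t) {t}, ← Finset.insert_eq,
        Finset.insert_erase ht, ← Finset.union_assoc]
      exact hd.cover
    · exact Finset.disjoint_of_subset_left (Finset.erase_subset t G) hd.disjGD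
    · intro Di hDi
      rcases Finset.mem_insert.1 hDi with rfl | hDi
      · exact Finset.disjoint_singleton_right.2 (Finset.notMem_erase t G)
      · exact Finset.disjoint_of_subset_left (Finset.erase_subset t G) (hd.disjGDs Di hDi)
    · intro Di hDi
      rcases Finset.mem_insert.1 hDi with rfl | hDi
      · exact Finset.disjoint_singleton_right.2 (Finset.disjoint_left.1 hd.disjGD ht)
      · exact hd.disjDDs Di hDi
    · intro Di hDi Dj hDj hne
      rcases Finset.mem_insert.1 hDi with rfl | hDi <;>
        rcases Finset.mem_insert.1 hDj with rfl | hDj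
      · exact absurd rfl hne
      · exact Finset.disjoint_singleton_left.2
          (fun hmem => Finset.disjoint_left.1 (hd.disjGDs Dj hDj) ht hmem)
      · exact Finset.disjoint_singleton_right.2
          (fun hmem => Finset.disjoint_left.1 (hd.disjGDs Di hDi) ht hmem)
      · exact hd.disjDsDs Di hDi Dj hDj hne
    · exact circleInter_erase hK hG hd.subG hd.subD hd.disjGD ht hbt hd.interGD
    · intro Di hDi
      rcases Finset.mem_insert.1 hDi with rfl | hDi
      · exact circleInter_erase_singleton hG ht hbt
      · exact circleInter_erase hK hG hd.subG (hd.subDs Di hDi) (hd.disjGDs Di hDi)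
          ht hbt (hd.interGDs Di hDi)
    · intro Di hDi
      rcases Finset.mem_insert.1 hDi with rfl | hDi
      · exact circleInter_piece_singleton hK hd.subG hd.subD hd.disjGD ht hbt hd.interGD
      · exact hd.interDDs Di hDi
    · intro Di hDi Dj hDj hne
      rcases Finset.mem_insert.1 hDi with rfl | hDi <;>
        rcases Finset.mem_insert.1 hDj with rfl | hDj
      · exact absurd rfl hne
      · exact circleInter_symm (circleInter_piece_singleton hK hd.subG (hd.subDs Dj hDj)
          (hd.disjGDs Dj hDj) ht hbt (hd.interGDs Dj hDj))
      · exact circleInter_piece_singleton hK hd.subG (hd.subDs Di hDi)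
          (hd.disjGDs Di hDi) ht hbt (hd.interGDs Di hDi)
      · exact hd.interDsDs Di hDi Dj hDj hne
  have hle := hmin (G.erase t) D (insert {t} Ds) hdecomp
  rw [Finset.card_erase_of_mem ht] at hle
  have hpos : 0 < G.card := Finset.card_pos.2 ⟨t, ht⟩
  omega

end Tri
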